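/- Let M = C C* be an admissible preconditioner for A. Then M⁻¹A is M-α-strongly monotone with α > 0 if and only if C* ▷ A = (C* A⁻¹ C)⁻¹ is α-strongly monotone on D; in that case the resolvent T̃ = (I + C* ▷ A)⁻¹ is a Lipschitz contraction with constant 1/(1+α). -/

import Mathlib

/-- `M⁻¹A` is `M`-`α`-strongly monotone iff `C* ▷ A` is `α`-strongly monotone; and in
that case (with `α > 0`) the resolvent `T̃ = (I + C* ▷ A)⁻¹` is a `1/(1+α)`-contraction. -/
theorem stmt15 {H D : Type} [NormedAddCommGroup H] [InnerProductSpace ℝ H] [CompleteSpace H]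
    [NormedAddCommGroup D] [InnerProductSpace ℝ D] [CompleteSpace D]
    (A : Set (H × H)) (M : H →L[ℝ] H) (C : D →L[ℝ] H) (α : ℝ)
    (hC : Function.Injective C)
    (hCsurj : Function.Surjective (ContinuousLinearMap.adjoint C))
    (hM : M = C ∘L (ContinuousLinearMap.adjoint C))
    -- `J = (M+A)⁻¹`, single-valued with full domain (admissibility)
    (J : H → H)
    (hJ : ∀ v : H, (J v, v - M (J v)) ∈ A)
    (hJuniq : ∀ v w : H, (w, v - M w) ∈ A → w = J v)
    -- the graph of `C* ▷ A = (C* A⁻¹ C)⁻¹`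
    (CA : Set (D × D))
    (hCA : CA = {p : D × D | ∃ x : H, (x, C p.2) ∈ A ∧
        p.1 = (ContinuousLinearMap.adjoint C) x}) :
    ((∀ u v u' v' : H, (u, M v) ∈ A → (u', M v') ∈ A →
        α * (inner ℝ (M (u - u')) (u - u') : ℝ) ≤ (inner ℝ (M (v - v')) (u - u') : ℝ)) ↔
      (∀ p ∈ CA, ∀ q ∈ CA,
        α * ‖p.1 - q.1‖ ^ 2 ≤ (inner ℝ (p.2 - q.2) (p.1 - q.1) : ℝ))) ∧
    (0 < α →
      (∀ u v u' v' : H, (u, M v) ∈ A → (u', M v') ∈ A →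
        α * (inner ℝ (M (u - u')) (u - u') : ℝ) ≤ (inner ℝ (M (v - v')) (u - u') : ℝ)) →
      ∀ w₁ w₂ : D,
        ‖(ContinuousLinearMap.adjoint C) (J (C w₁))
            - (ContinuousLinearMap.adjoint C) (J (C w₂))‖
          ≤ (1 / (1 + α)) * ‖w₁ - w₂‖) := by
  set Ct := ContinuousLinearMap.adjoint C with hCt
  -- key identity : ⟪M x, y⟫ = ⟪C* x, C* y⟫
  have key : ∀ x y : H, (inner ℝ (M x) y : ℝ) = (inner ℝ (Ct x) (Ct y) : ℝ) := by
    intro x y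
    rw [hM]
    simp only [ContinuousLinearMap.comp_apply]
    exact (ContinuousLinearMap.adjoint_inner_right C (Ct x) y).symm
  constructor
  · constructor
    · intro h p hp q hq
      rw [hCA] at hp hq
      obtain ⟨x, hxA, hx1⟩ := hp
      obtain ⟨x', hx'A, hx'1⟩ := hq
      obtain ⟨v, hv⟩ := hCsurj p.2
      obtain ⟨v', hv'⟩ := hCsurj q.2
      have hMv : M v = C p.2 := by rw [hM]; simp [hv]
      have hMv' : M v' = C q.2 := by rw [hM]; simp [hv']
      have hmn := h x v x' v' (hMv ▸ hxA) (hMv' ▸ hx'A)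
      rw [key (x - x') (x - x'), key (v - v') (x - x')] at hmn
      simp only [map_sub] at hmn
      rw [real_inner_self_eq_norm_sq] at hmn
      rw [hx1, hx'1, ← hv, ← hv']
      exact hmn
    · intro h u v u' v' hu hu'
      have hp : (Ct u, Ct v) ∈ CA := by
        rw [hCA]; exact ⟨u, by simpa [hM] using hu, rfl⟩
      have hq : (Ct u', Ct v') ∈ CA := by
        rw [hCA]; exact ⟨u', by simpa [hM] using hu', rfl⟩
      have hmn := h _ hp _ hq
      simp only at hmn
      rw [key (u - u') (u - u'), key (v - v') (u - u')]
      simp only [map_sub]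
      rw [real_inner_self_eq_norm_sq]
      exact hmn
  · intro hα hmono w₁ w₂
    set u₁ := J (C w₁) with hu₁
    set u₂ := J (C w₂) with hu₂
    obtain ⟨v₁, hv₁⟩ := hCsurj (w₁ - Ct u₁)
    obtain ⟨v₂, hv₂⟩ := hCsurj (w₂ - Ct u₂)
    have hMv₁ : M v₁ = C w₁ - M u₁ := by rw [hM]; simp [hv₁]
    have hMv₂ : M v₂ = C w₂ - M u₂ := by rw [hM]; simp [hv₂]
    have hA₁ : (u₁, M v₁) ∈ A := hMv₁ ▸ hJ (C w₁)
    have hA₂ : (u₂, M v₂) ∈ A := hMv₂ ▸ hJ (C w₂)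
    have hm := hmono u₁ v₁ u₂ v₂ hA₁ hA₂
    rw [key (u₁ - u₂) (u₁ - u₂), key (v₁ - v₂) (u₁ - u₂)] at hm
    simp only [map_sub] at hm
    rw [hv₁, hv₂] at hm
    set a := Ct u₁ - Ct u₂ with ha
    have hrw : (w₁ - Ct u₁) - (w₂ - Ct u₂) = (w₁ - w₂) - a := by rw [ha]; abel
    rw [hrw, real_inner_self_eq_norm_sq, inner_sub_left,
      real_inner_self_eq_norm_sq] at hm
    have hle := real_inner_le_norm (w₁ - w₂) a
    have h1 : (0:ℝ) < 1 + α := by linarith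
    by_cases haz : ‖a‖ = 0
    · rw [haz]; positivity
    · have hpos : 0 < ‖a‖ := lt_of_le_of_ne (norm_nonneg a) (Ne.symm haz)
      have h2 : (1 + α) * ‖a‖ ≤ ‖w₁ - w₂‖ := by nlinarith
      rw [one_div, inv_mul_eq_div, le_div_iff₀ h1]
      nlinarith
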